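/- Let G and H be connected graphs with G ≠ K_1. If D(G) = 1 then D(G ∘ H) = D(H). -/

import Mathlib

open SimpleGraph

/-- A vertex labeling with `d` labels is distinguishing if the only automorphism
preserving it is the identity. -/
def IsDistinguishing {V : Type*} (G : SimpleGraph V) {d : ℕ} (c : V → Fin d) : Prop :=
  ∀ φ : G ≃g G, (∀ v, c (φ v) = c v) → ∀ v, φ v = v

/-- The distinguishing number of a graph. -/
noncomputable def distinguishingNumber {V : Type*} (G : SimpleGraph V) : ℕ :=
  sInf {d : ℕ | ∃ c : V → Fin d, IsDistinguishing G c}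

/-- An edge labeling with `d` labels is distinguishing if the only automorphism
preserving it is the identity. -/
def IsDistinguishingEdge {V : Type*} (G : SimpleGraph V) {d : ℕ} (c : G.edgeSet → Fin d) : Prop :=
  ∀ φ : G ≃g G, (∀ e, c (φ.mapEdgeSet e) = c e) → ∀ v, φ v = v

/-- The distinguishing index of a graph. -/
noncomputable def distinguishingIndex {V : Type*} (G : SimpleGraph V) : ℕ :=
  sInf {d : ℕ | ∃ c : G.edgeSet → Fin d, IsDistinguishingEdge G c}

/-- The friendship graph `F n`: `n` triangles glued at a common central vertex `none`. -/
def friendshipGraph (n : ℕ) : SimpleGraph (Option (Fin n × Fin 2)) :=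
  SimpleGraph.fromRel (fun u v =>
    u = none ∨ ∃ i a b, u = some (i, a) ∧ v = some (i, b))

/-- The book graph `B n = K_{1,n} □ P₂`. -/
def bookGraph (n : ℕ) : SimpleGraph ((Fin 1 ⊕ Fin n) × Fin 2) :=
  (completeBipartiteGraph (Fin 1) (Fin n)) □ (SimpleGraph.pathGraph 2)

/-- The corona product `G ∘ H`: one copy of `G`, a copy of `H` for each vertex `v` of `G`,
with `v` joined to every vertex of its copy of `H`. -/
def coronaProduct {V W : Type*} (G : SimpleGraph V) (H : SimpleGraph W) :
    SimpleGraph (V ⊕ V × W) :=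
  SimpleGraph.fromRel (fun a b =>
    (∃ u v, a = Sum.inl u ∧ b = Sum.inl v ∧ G.Adj u v) ∨
    (∃ v w w', a = Sum.inr (v, w) ∧ b = Sum.inr (v, w') ∧ H.Adj w w') ∨
    (∃ v w, a = Sum.inl v ∧ b = Sum.inr (v, w)))

section Aux

variable {V W : Type*} {G : SimpleGraph V} {H : SimpleGraph W}

lemma corona_adj_inl_inl {u v : V} :
    (coronaProduct G H).Adj (Sum.inl u) (Sum.inl v) ↔ G.Adj u v := by
  simp only [coronaProduct, fromRel_adj, ne_eq, Sum.inl.injEq]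
  constructor
  · rintro ⟨hne, h | h⟩ <;>
      rcases h with (⟨a,b,ha,hb,hab⟩|⟨a,b,c,ha,hb,hab⟩|⟨a,b,ha,hb⟩) <;>
      simp_all
    · exact hab.symm
  · intro h
    exact ⟨h.ne, Or.inl (Or.inl ⟨u, v, rfl, rfl, h⟩)⟩

lemma corona_adj_inl_inr {u v : V} {w : W} :
    (coronaProduct G H).Adj (Sum.inl u) (Sum.inr (v, w)) ↔ u = v := by
  simp only [coronaProduct, fromRel_adj, ne_eq]
  constructor
  · rintro ⟨hne, h | h⟩ <;>
      rcases h with (⟨a,b,ha,hb,hab⟩|⟨a,b,c,ha,hb,hab⟩|⟨a,b,ha,hb⟩) <;>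
      simp_all
  · rintro rfl
    exact ⟨by simp, Or.inl (Or.inr (Or.inr ⟨u, w, rfl, rfl⟩))⟩

lemma corona_adj_inr_inr {v v' : V} {w w' : W} :
    (coronaProduct G H).Adj (Sum.inr (v, w)) (Sum.inr (v', w')) ↔ v = v' ∧ H.Adj w w' := by
  simp only [coronaProduct, fromRel_adj, ne_eq]
  constructor
  · rintro ⟨hne, h | h⟩ <;>
      rcases h with (⟨a,b,ha,hb,hab⟩|⟨a,b,c,ha,hb,hab⟩|⟨a,b,ha,hb⟩) <;>
      simp_all
    exact hab.symm
  · rintro ⟨rfl, h⟩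
    exact ⟨by simp [h.ne], Or.inl (Or.inr (Or.inl ⟨v, w, w', rfl, rfl, h⟩))⟩

lemma distinguishing_set_nonempty {V : Type*} [Fintype V] (G : SimpleGraph V) :
    {d : ℕ | ∃ c : V → Fin d, IsDistinguishing G c}.Nonempty :=
  ⟨Fintype.card V, Fintype.equivFin V, fun φ h v => (Fintype.equivFin V).injective (h v)⟩

section Fin

variable [Fintype V] [Fintype W]

lemma corona_degree_inr_le [DecidableRel (coronaProduct G H).Adj] (v : V) (w : W) :
    (coronaProduct G H).degree (Sum.inr (v, w)) ≤ Fintype.card W := by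
  classical
  rw [← SimpleGraph.card_neighborFinset_eq_degree]
  have := Finset.card_le_card_of_injOn
    (f := fun x : V ⊕ V × W => match x with | Sum.inl _ => w | Sum.inr (_, w') => w')
    (s := (coronaProduct G H).neighborFinset (Sum.inr (v, w)))
    (t := Finset.univ) (fun _ _ => Finset.mem_univ _) ?_
  · simpa using this
  · rintro (u | ⟨v1, w1⟩) hx (u' | ⟨v2, w2⟩) hy hf <;>
      rw [Finset.mem_coe, SimpleGraph.mem_neighborFinset] at hx hy
    · have h1 : u = v := corona_adj_inl_inr.mp hx.symm
      have h2 : u' = v := corona_adj_inl_inr.mp hy.symm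
      simp [h1, h2]
    · obtain ⟨rfl, h⟩ := corona_adj_inr_inr.mp hy
      simp only at hf
      exact absurd hf.symm h.ne'
    · obtain ⟨rfl, h⟩ := corona_adj_inr_inr.mp hx
      simp only at hf
      exact absurd hf h.ne'
    · obtain ⟨rfl, h1⟩ := corona_adj_inr_inr.mp hx
      obtain ⟨rfl, h2⟩ := corona_adj_inr_inr.mp hy
      simp only at hf
      simp [hf]

lemma corona_degree_inl_ge [DecidableRel (coronaProduct G H).Adj]
    (v : V) (u : V) (hu : G.Adj v u) :
    Fintype.card W + 1 ≤ (coronaProduct G H).degree (Sum.inl v) := by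
  classical
  rw [← SimpleGraph.card_neighborFinset_eq_degree]
  have hsub : insert (Sum.inl u) (Finset.univ.image (fun w : W => (Sum.inr (v, w) : V ⊕ V × W)))
      ⊆ (coronaProduct G H).neighborFinset (Sum.inl v) := by
    intro x hx
    rw [SimpleGraph.mem_neighborFinset]
    rcases Finset.mem_insert.mp hx with rfl | hx
    · exact corona_adj_inl_inl.mpr hu
    · obtain ⟨w', _, rfl⟩ := Finset.mem_image.mp hx
      exact corona_adj_inl_inr.mpr rfl
  have hcard : (insert (Sum.inl u)
      (Finset.univ.image (fun w : W => (Sum.inr (v, w) : V ⊕ V × W)))).card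
      = Fintype.card W + 1 := by
    rw [Finset.card_insert_of_notMem (by simp), Finset.card_image_of_injective _
      (fun a b hab => by simpa using hab)]
    simp
  calc Fintype.card W + 1 = _ := hcard.symm
    _ ≤ _ := Finset.card_le_card hsub

lemma corona_iso_inl (hne : ∀ v : V, ∃ u, G.Adj v u)
    (φ : coronaProduct G H ≃g coronaProduct G H) (v : V) :
    ∃ u, φ (Sum.inl v) = Sum.inl u := by
  classical
  haveI : DecidableRel (coronaProduct G H).Adj := Classical.decRel _
  have hdeg : (coronaProduct G H).degree (φ (Sum.inl v))
      = (coronaProduct G H).degree (Sum.inl v) := by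
    rw [← SimpleGraph.card_neighborSet_eq_degree, ← SimpleGraph.card_neighborSet_eq_degree]
    exact (Fintype.card_congr (φ.mapNeighborSet (Sum.inl v))).symm
  cases h : φ (Sum.inl v) with
  | inl u => exact ⟨u, rfl⟩
  | inr p =>
    exfalso
    obtain ⟨a, b⟩ := p
    obtain ⟨u, hu⟩ := hne v
    have h1 := corona_degree_inl_ge (G := G) (H := H) v u hu
    have h2 := corona_degree_inr_le (G := G) (H := H) a b
    rw [h] at hdeg
    omega

lemma corona_iso_fix_inl (hne : ∀ v : V, ∃ u, G.Adj v u)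
    (hAut : ∀ ψ : G ≃g G, ∀ v, ψ v = v)
    (φ : coronaProduct G H ≃g coronaProduct G H) (v : V) :
    φ (Sum.inl v) = Sum.inl v := by
  classical
  choose f hf using fun v => corona_iso_inl (H := H) hne φ v
  choose f' hf' using fun v => corona_iso_inl (H := H) hne φ.symm v
  have hleft : ∀ v, f' (f v) = v := by
    intro v
    have h1 : (Sum.inl (f' (f v)) : V ⊕ V × W) = Sum.inl v := by
      rw [← hf' (f v), ← hf v, RelIso.symm_apply_apply]
    exact Sum.inl.inj h1
  have hright : ∀ v, f (f' v) = v := by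
    intro v
    have h1 : (Sum.inl (f (f' v)) : V ⊕ V × W) = Sum.inl v := by
      rw [← hf (f' v), ← hf' v, RelIso.apply_symm_apply]
    exact Sum.inl.inj h1
  let ψ : G ≃g G :=
    { toEquiv := ⟨f, f', hleft, hright⟩,
      map_rel_iff' := by
        intro a b
        simp only [Equiv.coe_fn_mk]
        rw [← corona_adj_inl_inl (G := G) (H := H), ← hf a, ← hf b, φ.map_adj_iff,
          corona_adj_inl_inl] }
  have h2 : f v = v := hAut ψ v
  rw [hf v, h2]

lemma corona_iso_inr (hne : ∀ v : V, ∃ u, G.Adj v u)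
    (hAut : ∀ ψ : G ≃g G, ∀ v, ψ v = v)
    (φ : coronaProduct G H ≃g coronaProduct G H) (v : V) :
    ∃ ψ : H ≃g H, ∀ w, φ (Sum.inr (v, w)) = Sum.inr (v, ψ w) := by
  classical
  have key : ∀ (φ : coronaProduct G H ≃g coronaProduct G H) (v : V) (w : W),
      ∃ w', φ (Sum.inr (v, w)) = Sum.inr (v, w') := by
    intro φ v w
    cases h : φ (Sum.inr (v, w)) with
    | inl u =>
      exfalso
      have h2 : φ.symm (Sum.inl u) = Sum.inl u := corona_iso_fix_inl hne hAut φ.symm u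
      have h3 : φ.symm (φ (Sum.inr (v, w))) = Sum.inr (v, w) := RelIso.symm_apply_apply _ _
      rw [h, h2] at h3
      exact Sum.inl_ne_inr h3
    | inr p =>
      obtain ⟨v2, w2⟩ := p
      have hadj : (coronaProduct G H).Adj (Sum.inl v) (Sum.inr (v, w)) :=
        corona_adj_inl_inr.mpr rfl
      have h4 := φ.map_adj_iff.mpr hadj
      rw [corona_iso_fix_inl hne hAut φ v, h] at h4
      obtain rfl := corona_adj_inl_inr.mp h4
      exact ⟨w2, rfl⟩
  choose g hg using key φ v
  choose g' hg' using key φ.symm v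
  have hleft : ∀ w, g' (g w) = w := by
    intro w
    have h1 : (Sum.inr (v, g' (g w)) : V ⊕ V × W) = Sum.inr (v, w) := by
      rw [← hg' (g w), ← hg w, RelIso.symm_apply_apply]
    simpa using h1
  have hright : ∀ w, g (g' w) = w := by
    intro w
    have h1 : (Sum.inr (v, g (g' w)) : V ⊕ V × W) = Sum.inr (v, w) := by
      rw [← hg (g' w), ← hg' w, RelIso.apply_symm_apply]
    simpa using h1
  have hiff : ∀ a b : W, (coronaProduct G H).Adj (Sum.inr (v, a)) (Sum.inr (v, b)) ↔ H.Adj a b :=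
    by intro a b; rw [corona_adj_inr_inr]; simp
  refine ⟨{ toEquiv := ⟨g, g', hleft, hright⟩, map_rel_iff' := ?_ }, hg⟩
  intro a b
  simp only [Equiv.coe_fn_mk]
  rw [← hiff, ← hg a, ← hg b, φ.map_adj_iff, hiff]

end Fin

end Aux

theorem corona_distinguishingNumber_of_DG_one {V W : Type*} [Fintype V] [Fintype W]
    (G : SimpleGraph V) (H : SimpleGraph W)
    (hG : G.Connected) (hH : H.Connected) (hV : 2 ≤ Fintype.card V)
    (hDG : distinguishingNumber G = 1) :
    distinguishingNumber (coronaProduct G H) = distinguishingNumber H := by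
  classical
  -- Aut G is trivial
  have h1 : distinguishingNumber G ∈ {d : ℕ | ∃ c : V → Fin d, IsDistinguishing G c} :=
    Nat.sInf_mem (distinguishing_set_nonempty G)
  rw [hDG] at h1
  obtain ⟨cG, hcG⟩ := h1
  have hAut : ∀ ψ : G ≃g G, ∀ v, ψ v = v := fun ψ => hcG ψ (fun v => Subsingleton.elim _ _)
  -- every vertex of G has a neighbor
  have hne : ∀ v : V, ∃ u, G.Adj v u := by
    intro v
    obtain ⟨v', hv'⟩ := Fintype.exists_ne_of_one_lt_card (by omega) v
    obtain ⟨p⟩ := hG.preconnected v v'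
    cases p with
    | nil => exact absurd rfl hv'
    | cons h _ => exact ⟨_, h⟩
  obtain ⟨w0⟩ := hH.nonempty
  have hVne : Nonempty V := Fintype.card_pos_iff.mp (by omega)
  obtain ⟨v0⟩ := hVne
  refine le_antisymm ?_ ?_
  · -- D(G∘H) ≤ D(H)
    have hmem := Nat.sInf_mem (distinguishing_set_nonempty H)
    obtain ⟨cH, hcH⟩ := hmem
    apply Nat.sInf_le
    refine ⟨Sum.elim (fun _ => cH w0) (fun p => cH p.2), ?_⟩
    intro φ hφ x
    cases x with
    | inl v => exact corona_iso_fix_inl hne hAut φ v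
    | inr p =>
      obtain ⟨v, w⟩ := p
      obtain ⟨ψ, hψ⟩ := corona_iso_inr hne hAut φ v
      have hψid : ∀ w, ψ w = w := by
        refine hcH ψ (fun w => ?_)
        have h5 := hφ (Sum.inr (v, w))
        rw [hψ w] at h5
        exact h5
      rw [hψ w, hψid w]
  · -- D(H) ≤ D(G∘H)
    have hmem := Nat.sInf_mem (distinguishing_set_nonempty (coronaProduct G H))
    obtain ⟨cC, hcC⟩ := hmem
    apply Nat.sInf_le
    refine ⟨fun w => cC (Sum.inr (v0, w)), ?_⟩
    intro ψ hψ w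
    let e : V × W ≃ V × W :=
      { toFun := fun p => (p.1, if p.1 = v0 then ψ p.2 else p.2),
        invFun := fun p => (p.1, if p.1 = v0 then ψ.symm p.2 else p.2),
        left_inv := by rintro ⟨v, w⟩; by_cases h : v = v0 <;> simp [h],
        right_inv := by rintro ⟨v, w⟩; by_cases h : v = v0 <;> simp [h] }
    let φ : coronaProduct G H ≃g coronaProduct G H :=
      { toEquiv := Equiv.sumCongr (Equiv.refl V) e,
        map_rel_iff' := by
          have hsymm : ∀ (x : V ⊕ V × W) (u : V),
              (coronaProduct G H).Adj x (Sum.inl u) ↔ (coronaProduct G H).Adj (Sum.inl u) x :=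
            fun x u => (coronaProduct G H).adj_comm x (Sum.inl u)
          rintro (u | ⟨v, w⟩) (u' | ⟨v', w'⟩)
          · exact Iff.rfl
          · simp only [Equiv.sumCongr_apply, Sum.map_inl, Sum.map_inr, Equiv.refl_apply,
              id_eq, e, Equiv.coe_fn_mk]
            rw [corona_adj_inl_inr, corona_adj_inl_inr]
          · simp only [Equiv.sumCongr_apply, Sum.map_inl, Sum.map_inr, Equiv.refl_apply,
              id_eq, e, Equiv.coe_fn_mk]
            rw [hsymm, hsymm, corona_adj_inl_inr, corona_adj_inl_inr]
          · simp only [Equiv.sumCongr_apply, Sum.map_inl, Sum.map_inr, Equiv.refl_apply,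
              id_eq, e, Equiv.coe_fn_mk]
            rw [corona_adj_inr_inr, corona_adj_inr_inr]
            refine and_congr_right (fun hvv => ?_)
            subst hvv
            by_cases h : v = v0 <;> simp [h, ψ.map_adj_iff] }
    have hpres : ∀ x, cC (φ x) = cC x := by
      rintro (u | ⟨v, w⟩)
      · rfl
      · by_cases h : v = v0
        · subst h
          have : φ (Sum.inr (v, w)) = Sum.inr (v, ψ w) := by
            simp [φ, e, Equiv.sumCongr_apply]
          rw [this]
          exact hψ w
        · have : φ (Sum.inr (v, w)) = Sum.inr (v, w) := by
            simp [φ, e, Equiv.sumCongr_apply, h]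
          rw [this]
    have h6 := hcC φ hpres (Sum.inr (v0, w))
    have h7 : φ (Sum.inr (v0, w)) = Sum.inr (v0, ψ w) := by
      simp [φ, e, Equiv.sumCongr_apply]
    rw [h7] at h6
    exact congrArg Prod.snd (Sum.inr.inj h6)
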